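/- arXiv:quant-ph/0402170 — 2 statements merged into one kernel-verified Lean document; each statement's English description precedes it below -/
import Mathlib

section
/- Let D ≥ 1, and for each pair of bits b, g ∈ F₂ let ρ_b^g be a density matrix on ℂ^D and P̃_b^g a D×D complex matrix, satisfying for all a, b ∈ F₂: P̃_b^0 + P̃_b^1 = 1, P̃_b^a ρ_{b̄}^0 P̃_b^a = P̃_b^a ρ_{b̄}^1 P̃_b^a, and P̃_b^a ρ_{b̄}^0 P̃_b^{ā} = − P̃_b^a ρ_{b̄}^1 P̃_b^{ā} (where x̄ = 1 ⊕ x). Fix b ∈ F₂ⁿ, let C₀ ⊆ F₂ⁿ be a linear subspace and θ ∈ F₂ⁿ, and for a subset A ⊆ F₂ⁿ write ρ_A = |A|⁻¹ Σ_{g ∈ A} ⊗_{k=1}^n ρ_{b̄[k]}^{g[k]}. Then for all k, l ∈ F₂ⁿ: (⊗_{i=1}^n P̃_{b[i]}^{k[i]}) · ρ_{θ ⊕ C₀} · (⊗_{i=1}^n P̃_{b[i]}^{l[i]}) = (−1)^{θ·(k ⊕ l)} · (⊗_{i=1}^n P̃_{b[i]}^{k[i]}) · ρ_{C₀} · (⊗_{i=1}^n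 P̃_{b[i]}^{l[i]}), where θ ⊕ C₀ = {θ ⊕ g : g ∈ C₀} and θ·w denotes the standard F₂ inner product interpreted as an integer modulo 2. -/
open Matrix
open scoped ComplexOrder Classical

/-- The `n`-fold Kronecker/tensor product `⊗_{i=1}^n M_i`, as a matrix acting on
`(ℂ^D)^{⊗n}` (indexed by functions `Fin n → Fin D`). -/
noncomputable def tpow {D n : ℕ} (M : Fin n → Matrix (Fin D) (Fin D) ℂ) :
    Matrix (Fin n → Fin D) (Fin n → Fin D) ℂ :=
  Matrix.of fun x y => ∏ i, M i (x i) (y i)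

/-- `ρ_A = |A|⁻¹ Σ_{g ∈ A} ⊗_{k=1}^n ρ_{b̄[k]}^{g[k]}`. -/
noncomputable def rhoOf {D n : ℕ} (ρ : ZMod 2 → ZMod 2 → Matrix (Fin D) (Fin D) ℂ)
    (b : Fin n → ZMod 2) (A : Finset (Fin n → ZMod 2)) :
    Matrix (Fin n → Fin D) (Fin n → Fin D) ℂ :=
  ((A.card : ℂ))⁻¹ • ∑ g ∈ A, tpow (fun k => ρ (b k + 1) (g k))

lemma chi_add (x y : ZMod 2) : ((-1:ℂ))^((x+y).val) = (-1)^x.val * (-1)^y.val := by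
  rcases (show x = 0 ∨ x = 1 by revert x; decide) with rfl | rfl <;>
    rcases (show y = 0 ∨ y = 1 by revert y; decide) with rfl | rfl <;>
    norm_num [show ((2:ZMod 2)).val = 0 from rfl, show ((1:ZMod 2)).val = 1 from rfl,
      show ((0:ZMod 2)).val = 0 from rfl, show ((1:ZMod 2) + 1) = 0 from rfl]

lemma chi_sum {ι : Type*} (s : Finset ι) (f : ι → ZMod 2) :
    ((-1:ℂ))^((∑ i ∈ s, f i).val) = ∏ i ∈ s, ((-1:ℂ))^((f i).val) := by
  classical
  induction s using Finset.induction with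
  | empty => simp
  | insert a s h ih => rw [Finset.sum_insert h, Finset.prod_insert h, chi_add, ih]

lemma tpow_mul {D n : ℕ} (M N : Fin n → Matrix (Fin D) (Fin D) ℂ) :
    tpow M * tpow N = tpow (fun i => M i * N i) := by
  ext x y
  simp only [tpow, Matrix.mul_apply, Matrix.of_apply]
  rw [Finset.prod_univ_sum, Fintype.piFinset_univ]
  refine Finset.sum_congr rfl fun z _ => ?_
  rw [Finset.prod_mul_distrib]

lemma tpow_smul {D n : ℕ} (c : Fin n → ℂ) (A B : Fin n → Matrix (Fin D) (Fin D) ℂ)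
    (h : ∀ i, A i = c i • B i) : tpow A = (∏ i, c i) • tpow B := by
  ext x y
  simp only [tpow, Matrix.of_apply, Matrix.smul_apply, smul_eq_mul, h, ← Finset.prod_mul_distrib]

lemma flip_lemma {D : ℕ} (ρ Pt : ZMod 2 → ZMod 2 → Matrix (Fin D) (Fin D) ℂ)
    (hPt2 : ∀ a b : ZMod 2,
      Pt b a * ρ (b + 1) 0 * Pt b a = Pt b a * ρ (b + 1) 1 * Pt b a)
    (hPt3 : ∀ a b : ZMod 2,
      Pt b a * ρ (b + 1) 0 * Pt b (a + 1) = -(Pt b a * ρ (b + 1) 1 * Pt b (a + 1)))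
    (b k l g : ZMod 2) :
    Pt b k * ρ (b + 1) (1 + g) * Pt b l
      = ((-1:ℂ))^((k+l).val) • (Pt b k * ρ (b + 1) g * Pt b l) := by
  have hl : l = k ∨ l = k + 1 := by revert k l; decide
  rcases hl with rfl | rfl
  · have hkk : (l + l : ZMod 2) = 0 := by revert l; decide
    rw [hkk]
    have hg : g = 0 ∨ g = 1 := by revert g; decide
    rcases hg with rfl | rfl
    · simpa [show ((1:ZMod 2) + 0) = 1 from rfl, show ((0:ZMod 2)).val = 0 from rfl]
        using (hPt2 l b).symm
    · simpa [show ((1:ZMod 2) + 1) = 0 from rfl, show ((0:ZMod 2)).val = 0 from rfl]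
        using hPt2 l b
  · have hk1 : (k + (k + 1) : ZMod 2) = 1 := by revert k; decide
    rw [hk1]
    have hg : g = 0 ∨ g = 1 := by revert g; decide
    rcases hg with rfl | rfl
    · simp only [show ((1:ZMod 2) + 0) = 1 from rfl, show ((1:ZMod 2)).val = 1 from rfl,
        pow_one, neg_smul, one_smul]
      rw [hPt3 k b, neg_neg]
    · simp only [show ((1:ZMod 2) + 1) = 0 from rfl, show ((1:ZMod 2)).val = 1 from rfl,
        pow_one, neg_smul, one_smul]
      exact hPt3 k b

lemma site_lemma {D : ℕ} (ρ Pt : ZMod 2 → ZMod 2 → Matrix (Fin D) (Fin D) ℂ)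
    (hPt2 : ∀ a b : ZMod 2,
      Pt b a * ρ (b + 1) 0 * Pt b a = Pt b a * ρ (b + 1) 1 * Pt b a)
    (hPt3 : ∀ a b : ZMod 2,
      Pt b a * ρ (b + 1) 0 * Pt b (a + 1) = -(Pt b a * ρ (b + 1) 1 * Pt b (a + 1)))
    (θ b k l g : ZMod 2) :
    Pt b k * ρ (b + 1) (θ + g) * Pt b l
      = ((-1:ℂ))^((θ * (k+l)).val) • (Pt b k * ρ (b + 1) g * Pt b l) := by
  have hθ : θ = 0 ∨ θ = 1 := by revert θ; decide
  rcases hθ with rfl | rfl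
  · simp [show ((0:ZMod 2)).val = 0 from rfl]
  · rw [one_mul]
    exact flip_lemma ρ Pt hPt2 hPt3 b k l g

/-- coset shift identity:
`P̃_b^k ρ_{θ ⊕ C₀} P̃_b^l = (−1)^{θ·(k⊕l)} P̃_b^k ρ_{C₀} P̃_b^l`. -/
theorem stmt10 (D n : ℕ) (hD : 1 ≤ D)
    (ρ Pt : ZMod 2 → ZMod 2 → Matrix (Fin D) (Fin D) ℂ)
    (hρ : ∀ b g, (ρ b g).PosSemidef ∧ (ρ b g).trace = 1)
    (hPt1 : ∀ b : ZMod 2, Pt b 0 + Pt b 1 = 1)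
    (hPt2 : ∀ a b : ZMod 2,
      Pt b a * ρ (b + 1) 0 * Pt b a = Pt b a * ρ (b + 1) 1 * Pt b a)
    (hPt3 : ∀ a b : ZMod 2,
      Pt b a * ρ (b + 1) 0 * Pt b (a + 1) = -(Pt b a * ρ (b + 1) 1 * Pt b (a + 1)))
    (b : Fin n → ZMod 2)
    (C0 : Submodule (ZMod 2) (Fin n → ZMod 2)) (θ : Fin n → ZMod 2)
    (k l : Fin n → ZMod 2) :
    tpow (fun i => Pt (b i) (k i)) *
        rhoOf ρ b ((Finset.univ.filter (fun g => g ∈ C0)).image (fun g => θ + g)) *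
        tpow (fun i => Pt (b i) (l i)) =
      ((-1 : ℂ)) ^ ((θ ⬝ᵥ (k + l)).val) •
        (tpow (fun i => Pt (b i) (k i)) *
          rhoOf ρ b (Finset.univ.filter (fun g => g ∈ C0)) *
          tpow (fun i => Pt (b i) (l i))) := by
  classical
  set F : Finset (Fin n → ZMod 2) := Finset.univ.filter (fun g => g ∈ C0) with hF
  have hinj : Function.Injective (fun g : Fin n → ZMod 2 => θ + g) :=
    fun a a' h => by simpa using h
  have expand : ∀ (A : Finset (Fin n → ZMod 2)),
      tpow (fun i => Pt (b i) (k i)) * rhoOf ρ b A * tpow (fun i => Pt (b i) (l i))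
        = ((A.card : ℂ))⁻¹ • ∑ g ∈ A,
            (tpow (fun i => Pt (b i) (k i)) * tpow (fun j => ρ (b j + 1) (g j)) *
              tpow (fun i => Pt (b i) (l i))) := by
    intro A
    simp only [rhoOf, Matrix.mul_smul, Matrix.smul_mul, Finset.mul_sum, Finset.sum_mul]
  have hsign : ((-1:ℂ)) ^ ((θ ⬝ᵥ (k + l)).val)
      = ∏ i, ((-1:ℂ))^((θ i * (k i + l i)).val) := by
    rw [show θ ⬝ᵥ (k + l) = ∑ i, θ i * (k i + l i) from rfl, chi_sum]
  have key : ∀ g : Fin n → ZMod 2,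
      tpow (fun i => Pt (b i) (k i)) * tpow (fun j => ρ (b j + 1) ((θ + g) j)) *
          tpow (fun i => Pt (b i) (l i))
        = ((-1:ℂ)) ^ ((θ ⬝ᵥ (k + l)).val) •
          (tpow (fun i => Pt (b i) (k i)) * tpow (fun j => ρ (b j + 1) (g j)) *
            tpow (fun i => Pt (b i) (l i))) := by
    intro g
    rw [tpow_mul, tpow_mul, tpow_mul, tpow_mul]
    rw [tpow_smul (fun i => ((-1:ℂ))^((θ i * (k i + l i)).val))
      (fun i => Pt (b i) (k i) * ρ (b i + 1) ((θ + g) i) * Pt (b i) (l i))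
      (fun i => Pt (b i) (k i) * ρ (b i + 1) (g i) * Pt (b i) (l i))
      (fun i => site_lemma ρ Pt hPt2 hPt3 (θ i) (b i) (k i) (l i) (g i)), hsign]
  rw [expand, expand, Finset.card_image_of_injective F hinj,
    Finset.sum_image (fun x _ y _ h => hinj h)]
  simp only [key]
  rw [← Finset.smul_sum, smul_comm]
end

section
/- (Gilbert–Varshamov) Let n, r, t be strictly positive integers with r ≤ n satisfying 2^{r+1} > Σ_{i=0}^{2t} C(n, i). Then there exists a linear subspace S of F₂ⁿ of dimension n − r such that every nonzero vector in S has Hamming weight at least 2t + 1 (i.e., S is an (n, n−r) linear code that can correct t errors). -/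
open Finset Module Pointwise

private lemma zmod2_cases (a : ZMod 2) : a = 0 ∨ a = 1 := by revert a; decide

private lemma ball_count (n m : ℕ) :
    (Finset.univ.filter fun v : Fin n → ZMod 2 => hammingNorm v ≤ m).card ≤
      ∑ i ∈ Finset.range (m + 1), n.choose i := by
  classical
  have h1 : (Finset.univ.filter fun v : Fin n → ZMod 2 => hammingNorm v ≤ m).card ≤
      ((Finset.range (m + 1)).biUnion
        (fun i => Finset.powersetCard i (Finset.univ : Finset (Fin n)))).card := by
    apply Finset.card_le_card_of_injOn (fun v => Finset.univ.filter fun i => v i ≠ 0)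
    · intro v hv
      simp only [Finset.coe_filter, Finset.mem_coe, Finset.mem_filter, Finset.mem_univ, true_and, Set.mem_setOf_eq] at hv ⊢
      rw [Finset.mem_biUnion]
      refine ⟨hammingNorm v, ?_, ?_⟩
      · rw [Finset.mem_range]; omega
      · rw [Finset.mem_powersetCard]
        exact ⟨Finset.subset_univ _, rfl⟩
    · intro v _ w _ h
      funext i
      have hi := Finset.ext_iff.mp h i
      simp only [Finset.mem_filter, Finset.mem_univ, true_and] at hi
      rcases zmod2_cases (v i) with hv | hv <;> rcases zmod2_cases (w i) with hw | hw <;>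
        simp_all
  refine h1.trans ((Finset.card_biUnion_le).trans ?_)
  apply Finset.sum_le_sum
  intro i _
  rw [Finset.card_powersetCard, Finset.card_univ, Fintype.card_fin]

private lemma gv_aux (n r t : ℕ) (hrn : r ≤ n)
    (hgv : (∑ i ∈ Finset.range (2 * t + 1), n.choose i) < 2 ^ (r + 1)) :
    ∀ k, k ≤ n - r → ∃ S : Submodule (ZMod 2) (Fin n → ZMod 2),
      Module.finrank (ZMod 2) S = k ∧ ∀ v ∈ S, v ≠ 0 → 2 * t + 1 ≤ hammingNorm v := by
  classical
  set B : Finset (Fin n → ZMod 2) :=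
    Finset.univ.filter fun v => hammingNorm v ≤ 2 * t with hBdef
  have hB0 : (0 : Fin n → ZMod 2) ∈ B := by
    simp [hBdef, hammingNorm]
  have hBcard : B.card < 2 ^ (r + 1) := lt_of_le_of_lt (ball_count n (2 * t)) hgv
  intro k
  induction k with
  | zero =>
    intro _
    refine ⟨⊥, finrank_bot _ _, ?_⟩
    intro v hv hv0
    exact absurd (by simpa using hv) hv0
  | succ k ih =>
    intro hk
    obtain ⟨S, hSrank, hSmin⟩ := ih (by omega)
    have : FiniteDimensional (ZMod 2) (Fin n → ZMod 2) := by infer_instance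
    set Sf : Finset (Fin n → ZMod 2) := (S : Set (Fin n → ZMod 2)).toFinset with hSfdef
    have hSfcard : Sf.card = 2 ^ k := by
      rw [hSfdef, Set.toFinset_card]
      have := card_eq_pow_finrank (K := ZMod 2) (V := S)
      rw [ZMod.card, hSrank] at this
      simpa using this
    have hcard : (Sf + B).card < Fintype.card (Fin n → ZMod 2) := by
      calc (Sf + B).card ≤ Sf.card * B.card := Finset.card_add_le
        _ < 2 ^ k * 2 ^ (r + 1) := by
            apply Nat.mul_lt_mul_of_le_of_lt (le_of_eq hSfcard) hBcard
            exact Nat.pow_pos (by norm_num)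
        _ = 2 ^ (k + (r + 1)) := (pow_add 2 k (r + 1)).symm
        _ ≤ 2 ^ n := Nat.pow_le_pow_right (by norm_num) (by omega)
        _ = Fintype.card (Fin n → ZMod 2) := by
            rw [Fintype.card_fun, ZMod.card, Fintype.card_fin]
    -- find a vector outside Sf + B
    have hne : ((Sf + B)ᶜ : Finset (Fin n → ZMod 2)).Nonempty := by
      rw [← Finset.card_pos, Finset.card_compl]
      omega
    obtain ⟨v, hv⟩ := hne
    rw [Finset.mem_compl] at hv
    have key : ∀ s ∈ S, ¬ hammingNorm (v + s) ≤ 2 * t := by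
      intro s hs hle
      apply hv
      have hmem : (v + s) ∈ B := by simp [hBdef, hle]
      have hsf : s ∈ Sf := by simp [hSfdef, hs]
      have : s + (v + s) = v := by
        funext i
        simp only [Pi.add_apply]
        have : s i + (v i + s i) = v i + (s i + s i) := by ring
        rw [this, CharTwo.add_self_eq_zero, add_zero]
      exact this ▸ Finset.add_mem_add hsf hmem
    have hvS : v ∉ S := by
      intro hvs
      apply key v hvs
      have hvv : v + v = 0 := by funext i; exact CharTwo.add_self_eq_zero _
      rw [hvv, hammingNorm_zero]
      omega
    have hv0 : v ≠ 0 := fun h => hvS (h ▸ S.zero_mem)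
    set S' := S ⊔ (ZMod 2) ∙ v with hS'def
    have hvS' : v ∈ S' := Submodule.mem_sup_right (Submodule.mem_span_singleton_self v)
    have hlt : S < S' := lt_of_le_of_ne le_sup_left (fun h => hvS (h ▸ hvS'))
    have h1 : k < finrank (ZMod 2) S' := hSrank ▸ Submodule.finrank_lt_finrank_of_lt hlt
    have h2 : finrank (ZMod 2) S' ≤ k + 1 := by
      have hsp : finrank (ZMod 2) ((ZMod 2) ∙ v) = 1 := finrank_span_singleton hv0
      have heq := Submodule.finrank_sup_add_finrank_inf_eq S ((ZMod 2) ∙ v)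
      rw [← hS'def, hSrank, hsp] at heq
      omega
    refine ⟨S', by omega, ?_⟩
    intro w hw hw0
    rw [hS'def, Submodule.mem_sup] at hw
    obtain ⟨s, hs, z, hz, rfl⟩ := hw
    rw [Submodule.mem_span_singleton] at hz
    obtain ⟨c, rfl⟩ := hz
    rcases zmod2_cases c with hc | hc
    · subst hc
      rw [zero_smul, add_zero] at hw0 ⊢
      exact hSmin s hs hw0
    · subst hc
      rw [one_smul]
      have := key s hs
      rw [show v + s = s + v by ring] at this
      omega

/-- Gilbert–Varshamov: if `2^{r+1} > Σ_{i=0}^{2t} C(n,i)` with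
`n, r, t > 0` and `r ≤ n`, then there is a linear `(n, n−r)` code over `F₂` all of whose
nonzero words have Hamming weight at least `2t + 1` (i.e. it corrects `t` errors). -/
theorem stmt17 (n r t : ℕ) (hn : 0 < n) (hr : 0 < r) (ht : 0 < t) (hrn : r ≤ n)
    (hgv : (∑ i ∈ Finset.range (2 * t + 1), n.choose i) < 2 ^ (r + 1)) :
    ∃ S : Submodule (ZMod 2) (Fin n → ZMod 2),
      Module.finrank (ZMod 2) S = n - r ∧
      ∀ v ∈ S, v ≠ 0 → 2 * t + 1 ≤ hammingNorm v := by
  exact gv_aux n r t hrn hgv (n - r) le_rfl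
end
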